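/- In the rational double affine Hecke–Clifford algebra H^c_{A_{n−1}}(u), for every integer l ≥ 0 and all i ≠ j: [y_j^l, x_i] = u·(Σ_{a=0}^{l−1} y_j^a y_i^{l−1−a})·(1 + c_j c_i)·s_{ij}, and [y_i^l, x_i] = −u·Σ_{k≠i} (Σ_{a=0}^{l−1} y_i^a y_k^{l−1−a})·(1 + c_k c_i)·s_{ki}. -/

import Mathlib

noncomputable section

abbrev SignFn (n : ℕ) := Fin n → ℤˣ

/-- The permutation action on sign functions. -/
def permAut (n : ℕ) : Equiv.Perm (Fin n) →* MulAut (SignFn n) where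
  toFun σ :=
    { toFun := fun f => f ∘ σ.symm
      invFun := fun f => f ∘ σ
      left_inv := fun f => by ext k; simp
      right_inv := fun f => by ext k; simp
      map_mul' := fun f g => rfl }
  map_one' := by ext f k; simp; rfl
  map_mul' := fun σ τ => by
    ext f k
    show (f ((σ * τ).symm k) : ℤ) = f (τ.symm (σ.symm k))
    rw [Equiv.Perm.mul_def, Equiv.symm_trans_apply]

/-- The hyperoctahedral group `W_{B_n}` of signed permutations, as a semidirect product. -/
abbrev WB (n : ℕ) := SignFn n ⋊[permAut n] Equiv.Perm (Fin n)

/-- the transposition `s_{ij}` in `W_{B_n}`. -/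
def sB {n : ℕ} (i j : Fin n) : WB n := ⟨1, Equiv.swap i j⟩

/-- the transposition with sign changes `s̄_{ij}` in `W_{B_n}`. -/
def sbarB {n : ℕ} (i j : Fin n) : WB n :=
  ⟨fun k => if k = i ∨ k = j then -1 else 1, Equiv.swap i j⟩

/-- the sign change `τ_i` at `i` in `W_{B_n}`. -/
def tauB {n : ℕ} (i : Fin n) : WB n := ⟨fun k => if k = i then -1 else 1, 1⟩

/-- The signed-permutation action of `w ∈ W_{B_n}` on a basis vector `e_i`:
`w(e_i) = (sign) • e_{(index)}`; we record the pair (sign, index). -/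
def actB {n : ℕ} (w : WB n) (i : Fin n) : ℂ × Fin n :=
  (((w.left (w.right i) : ℤ) : ℂ), w.right i)

/-- `W_{D_n}` as the subgroup of even signed permutations inside `W_{B_n}`. -/
def WDsub (n : ℕ) : Subgroup (WB n) where
  carrier := {w | ∏ k, w.left k = 1}
  one_mem' := by simp
  mul_mem' := by
    intro a b ha hb
    simp only [Set.mem_setOf_eq] at *
    have h1 : (a * b).left = a.left * (permAut n a.right) b.left := rfl
    rw [h1]
    rw [show (∏ k, (a.left * (permAut n a.right) b.left) k) = (∏ k, a.left k) * ∏ k, (permAut n a.right) b.left k from Finset.prod_mul_distrib, ha, one_mul]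
    calc ∏ k, (permAut n a.right) b.left k = ∏ k, b.left (a.right.symm k) := rfl
      _ = ∏ k, b.left k := Equiv.prod_comp a.right.symm b.left
      _ = 1 := hb
  inv_mem' := by
    intro a ha
    simp only [Set.mem_setOf_eq] at *
    have h1 : (a⁻¹).left = (permAut n a.right⁻¹) a.left⁻¹ := rfl
    rw [h1]
    calc ∏ k, (permAut n a.right⁻¹) a.left⁻¹ k
        = ∏ k, a.left⁻¹ ((a.right⁻¹).symm k) := rfl
      _ = ∏ k, (a.left k)⁻¹ := Equiv.prod_comp _ _
      _ = (∏ k, a.left k)⁻¹ := by rw [← Finset.prod_inv_distrib]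
      _ = 1 := by rw [ha]; simp

lemma sB_mem {n : ℕ} (i j : Fin n) : sB i j ∈ WDsub n := by
  simp [WDsub, sB]

lemma sbarB_mem {n : ℕ} {i j : Fin n} (h : i ≠ j) : sbarB i j ∈ WDsub n := by
  show ∏ k, (if k = i ∨ k = j then (-1 : ℤˣ) else 1) = 1
  have step : ∀ k, (if k = i ∨ k = j then (-1 : ℤˣ) else 1)
      = (if k = i then -1 else 1) * (if k = j then -1 else 1) := by
    intro k
    by_cases h1 : k = i <;> by_cases h2 : k = j <;> simp_all
  simp_rw [step, Finset.prod_mul_distrib, Finset.prod_ite_eq', Finset.mem_univ, if_true]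
  norm_num

/-- the transposition `s_{ij}` as an element of `W_{D_n}`. -/
def sD {n : ℕ} (i j : Fin n) : WDsub n := ⟨sB i j, sB_mem i j⟩

/-- the transposition with sign changes `s̄_{ij}` as an element of `W_{D_n}` (junk value `1`
when `i = j`). -/
def sbarD {n : ℕ} (i j : Fin n) : WDsub n :=
  if h : i = j then 1 else ⟨sbarB i j, sbarB_mem h⟩

/-- The signed-permutation action for `W_{D_n}`. -/
def actD {n : ℕ} (w : WDsub n) (i : Fin n) : ℂ × Fin n := actB w.1 i

/-- The (trivially signed) permutation action of `S_n`. -/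
def actA (n : ℕ) (σ : Equiv.Perm (Fin n)) (i : Fin n) : ℂ × Fin n := (1, σ i)

/-- Generators of a rational double affine Hecke-Clifford algebra:
`x_i`, `y_i`, Clifford generators `c_i`, and group elements `w ∈ W`. -/
inductive HGen (n : ℕ) (G : Type) : Type
  | x : Fin n → HGen n G
  | y : Fin n → HGen n G
  | c : Fin n → HGen n G
  | g : G → HGen n G

/-- The free algebra on the generators. -/
abbrev HF (n : ℕ) (G : Type) := FreeAlgebra ℂ (HGen n G)

def hX {n : ℕ} {G : Type} (i : Fin n) : HF n G := FreeAlgebra.ι ℂ (HGen.x i)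
def hY {n : ℕ} {G : Type} (i : Fin n) : HF n G := FreeAlgebra.ι ℂ (HGen.y i)
def hC {n : ℕ} {G : Type} (i : Fin n) : HF n G := FreeAlgebra.ι ℂ (HGen.c i)
def hG {n : ℕ} {G : Type} (w : G) : HF n G := FreeAlgebra.ι ℂ (HGen.g w)

/-- The defining relations of a rational double affine Hecke-Clifford algebra, where
`act w i = (sign, index)` records the (signed) permutation action `w(e_i) = sign • e_index`
of the group `W` on the basis vectors, and `R j i` is the prescribed value of the
commutator `[y_j, x_i]`. -/
inductive HRel (n : ℕ) (G : Type) [Group G] (act : G → Fin n → ℂ × Fin n)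
    (R : Fin n → Fin n → HF n G) : HF n G → HF n G → Prop
  | cc (i : Fin n) : HRel n G act R (hC i * hC i) 1
  | canti {i j : Fin n} (h : i ≠ j) : HRel n G act R (hC i * hC j) (-(hC j * hC i))
  | xx (i j : Fin n) : HRel n G act R (hX i * hX j) (hX j * hX i)
  | yy (i j : Fin n) : HRel n G act R (hY i * hY j) (hY j * hY i)
  | yc (i j : Fin n) : HRel n G act R (hY i * hC j) (hC j * hY i)
  | xcs (i : Fin n) : HRel n G act R (hX i * hC i) (-(hC i * hX i))
  | xc {i j : Fin n} (h : i ≠ j) : HRel n G act R (hX i * hC j) (hC j * hX i)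
  | gone : HRel n G act R (hG (1 : G)) 1
  | gmul (w w' : G) : HRel n G act R (hG w * hG w') (hG (w * w'))
  | gx (w : G) (i : Fin n) :
      HRel n G act R (hG w * hX i) ((act w i).1 • (hX (act w i).2 * hG w))
  | gy (w : G) (i : Fin n) :
      HRel n G act R (hG w * hY i) ((act w i).1 • (hY (act w i).2 * hG w))
  | gc (w : G) (i : Fin n) :
      HRel n G act R (hG w * hC i) ((act w i).1 • (hC (act w i).2 * hG w))
  | yx (j i : Fin n) : HRel n G act R (hY j * hX i) (hX i * hY j + R j i)

/-- A rational double affine Hecke-Clifford algebra, presented by generators and relations. -/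
abbrev DaHCa (n : ℕ) (G : Type) [Group G] (act : G → Fin n → ℂ × Fin n)
    (R : Fin n → Fin n → HF n G) := RingQuot (HRel n G act R)

variable {n : ℕ} {G : Type} [Group G] {act : G → Fin n → ℂ × Fin n}
  {R : Fin n → Fin n → HF n G}

def dX (act : G → Fin n → ℂ × Fin n) (R : Fin n → Fin n → HF n G) (i : Fin n) :
    DaHCa n G act R := RingQuot.mkAlgHom ℂ (HRel n G act R) (hX i)
def dY (act : G → Fin n → ℂ × Fin n) (R : Fin n → Fin n → HF n G) (i : Fin n) :
    DaHCa n G act R := RingQuot.mkAlgHom ℂ (HRel n G act R) (hY i)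
def dC (act : G → Fin n → ℂ × Fin n) (R : Fin n → Fin n → HF n G) (i : Fin n) :
    DaHCa n G act R := RingQuot.mkAlgHom ℂ (HRel n G act R) (hC i)
def dG (act : G → Fin n → ℂ × Fin n) (R : Fin n → Fin n → HF n G) (w : G) :
    DaHCa n G act R := RingQuot.mkAlgHom ℂ (HRel n G act R) (hG w)

/-- The right-hand side of the commutation relations `[y_j, x_i]` in the rational
DaHCa of type `A_{n-1}`:  `[y_j,x_i] = u(1+c_j c_i)s_{ji}` for `i ≠ j` and
`[y_i,x_i] = -u Σ_{k≠i} (1+c_k c_i)s_{ki}`. -/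
def RA (n : ℕ) (u : ℂ) (j i : Fin n) : HF n (Equiv.Perm (Fin n)) :=
  if j = i then
    -(u • ∑ k ∈ Finset.univ.erase i, (1 + hC k * hC i) * hG (Equiv.swap k i))
  else
    u • ((1 + hC j * hC i) * hG (Equiv.swap j i))

/-- The rational double affine Hecke-Clifford algebra of type `A_{n-1}`. -/
abbrev HCA (n : ℕ) (u : ℂ) := DaHCa n (Equiv.Perm (Fin n)) (actA n) (RA n u)

def xA {n : ℕ} {u : ℂ} (i : Fin n) : HCA n u := dX (actA n) (RA n u) i
def yA {n : ℕ} {u : ℂ} (i : Fin n) : HCA n u := dY (actA n) (RA n u) i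
def cA {n : ℕ} {u : ℂ} (i : Fin n) : HCA n u := dC (actA n) (RA n u) i
def gA {n : ℕ} {u : ℂ} (w : Equiv.Perm (Fin n)) : HCA n u := dG (actA n) (RA n u) w

section Aux

variable {u : ℂ}

/-- The quotient map. -/
abbrev piA (n : ℕ) (u : ℂ) : HF n (Equiv.Perm (Fin n)) →ₐ[ℂ] HCA n u :=
  RingQuot.mkAlgHom ℂ (HRel n (Equiv.Perm (Fin n)) (actA n) (RA n u))

lemma relA {a b : HF n (Equiv.Perm (Fin n))}
    (h : HRel n (Equiv.Perm (Fin n)) (actA n) (RA n u) a b) : piA n u a = piA n u b :=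
  RingQuot.mkAlgHom_rel ℂ h

lemma hyx (j i : Fin n) : (yA j : HCA n u) * xA i = xA i * yA j + piA n u (RA n u j i) := by
  have h := relA (u := u) (HRel.yx j i)
  simp only [map_mul, map_add] at h; exact h

lemma hgy (w : Equiv.Perm (Fin n)) (i : Fin n) :
    (gA w : HCA n u) * yA i = yA (w i) * gA w := by
  have h := relA (u := u) (HRel.gy w i)
  simp only [map_mul, map_smul, actA, one_smul] at h; exact h

lemma hcy (i j : Fin n) : (yA i : HCA n u) * cA j = cA j * yA i := by
  have h := relA (u := u) (HRel.yc i j)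
  simp only [map_mul] at h; exact h

lemma piRA_ne {j i : Fin n} (h : j ≠ i) :
    piA n u (RA n u j i) = u • ((1 + cA j * cA i) * gA (Equiv.swap j i)) := by
  simp only [RA, if_neg h, map_smul, map_mul, map_add, map_one]
  rfl

lemma piRA_eq (i : Fin n) :
    piA n u (RA n u i i)
      = -(u • ∑ k ∈ Finset.univ.erase i, (1 + cA k * cA i) * gA (Equiv.swap k i)) := by
  have h : RA n u i i
      = -(u • ∑ k ∈ Finset.univ.erase i, (1 + hC k * hC i) * hG (Equiv.swap k i)) :=
    if_pos rfl
  rw [h, map_neg, map_smul, map_sum]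
  simp only [map_mul, map_add, map_one]
  rfl

lemma cc_y (a b m : Fin n) :
    (cA a * cA b : HCA n u) * yA m = yA m * (cA a * cA b) := by
  rw [mul_assoc, ← hcy, ← mul_assoc, ← hcy, mul_assoc]

lemma T_yA (a b m : Fin n) (w : Equiv.Perm (Fin n)) :
    ((1 + cA a * cA b) * gA w : HCA n u) * yA m
      = yA (w m) * ((1 + cA a * cA b) * gA w) := by
  rw [mul_assoc, hgy, ← mul_assoc, ← mul_assoc]
  congr 1
  rw [add_mul, mul_add, one_mul, mul_one, cc_y]

lemma t_pow {A : Type*} [Ring A] (t a b : A) (h : t * a = b * t) (l : ℕ) :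
    t * a ^ l = b ^ l * t := by
  induction l with
  | zero => simp
  | succ m ih =>
    rw [pow_succ, ← mul_assoc, ih, mul_assoc, h, pow_succ, mul_assoc]

lemma sum_split {A : Type*} [Ring A] (p q : A) (l : ℕ) :
    ∑ a ∈ Finset.range (l + 1), p ^ a * q ^ (l - a)
      = p * (∑ a ∈ Finset.range l, p ^ a * q ^ (l - 1 - a)) + q ^ l := by
  rw [Finset.sum_range_succ', Finset.mul_sum]
  simp only [pow_zero, one_mul, Nat.sub_zero]
  congr 1
  refine Finset.sum_congr rfl fun a _ => ?_
  have he : l - (a + 1) = l - 1 - a := by omega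
  rw [he, pow_succ', mul_assoc]

lemma comm_step {A : Type*} [Ring A] (y x : A) (l : ℕ) :
    y ^ (l + 1) * x - x * y ^ (l + 1)
      = y * (y ^ l * x - x * y ^ l) + (y * x - x * y) * y ^ l := by
  rw [pow_succ']
  noncomm_ring

lemma part1 (n : ℕ) (u : ℂ) (i j : Fin n) (hij : i ≠ j) (l : ℕ) :
    (yA j : HCA n u) ^ l * xA i - xA i * yA j ^ l
      = u • ((∑ a ∈ Finset.range l, yA j ^ a * yA i ^ (l - 1 - a))
          * ((1 + cA j * cA i) * gA (Equiv.swap i j))) := by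
  induction l with
  | zero => simp
  | succ l ih =>
    set T : HCA n u := (1 + cA j * cA i) * gA (Equiv.swap i j) with hT
    have hTy : T * yA j = yA i * T := by
      have := T_yA (u := u) j i j (Equiv.swap i j)
      rwa [Equiv.swap_apply_right] at this
    have base : (yA j : HCA n u) * xA i - xA i * yA j = u • T := by
      rw [hyx, piRA_ne hij.symm, Equiv.swap_comm]
      abel
    rw [comm_step, ih, base, smul_mul_assoc, mul_smul_comm, ← smul_add,
      t_pow T (yA j) (yA i) hTy l]
    congr 1
    rw [← mul_assoc, ← add_mul]
    congr 1
    simp only [Nat.add_sub_cancel]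
    rw [sum_split]

lemma comm_step2 {A : Type*} [Ring A] (y x : A) (l : ℕ) :
    x * y ^ (l + 1) - y ^ (l + 1) * x
      = y * (x * y ^ l - y ^ l * x) + (x * y - y * x) * y ^ l := by
  rw [pow_succ']
  noncomm_ring

lemma part2' (n : ℕ) (u : ℂ) (i : Fin n) (l : ℕ) :
    (xA i : HCA n u) * yA i ^ l - yA i ^ l * xA i
      = u • ∑ k ∈ Finset.univ.erase i,
          (∑ a ∈ Finset.range l, yA i ^ a * yA k ^ (l - 1 - a))
            * ((1 + cA k * cA i) * gA (Equiv.swap k i)) := by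
  induction l with
  | zero => simp
  | succ l ih =>
    set T : Fin n → HCA n u := fun k => (1 + cA k * cA i) * gA (Equiv.swap k i) with hT
    have hTy : ∀ k, T k * yA i = yA k * T k := by
      intro k
      have := T_yA (u := u) k i i (Equiv.swap k i)
      rwa [Equiv.swap_apply_right] at this
    have base : (xA i : HCA n u) * yA i - yA i * xA i
        = u • ∑ k ∈ Finset.univ.erase i, T k := by
      rw [hyx, piRA_eq]
      abel
    rw [comm_step2, ih, base, mul_smul_comm, smul_mul_assoc, ← smul_add]
    congr 1
    rw [Finset.mul_sum, Finset.sum_mul, ← Finset.sum_add_distrib]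
    refine Finset.sum_congr rfl fun k _ => ?_
    rw [t_pow (T k) (yA i) (yA k) (hTy k) l, ← mul_assoc, ← add_mul]
    congr 1
    simp only [Nat.add_sub_cancel]
    rw [sum_split]

lemma part2 (n : ℕ) (u : ℂ) (i : Fin n) (l : ℕ) :
    (yA i : HCA n u) ^ l * xA i - xA i * yA i ^ l
      = -(u • ∑ k ∈ Finset.univ.erase i,
          (∑ a ∈ Finset.range l, yA i ^ a * yA k ^ (l - 1 - a))
            * ((1 + cA k * cA i) * gA (Equiv.swap k i))) := by
  rw [← neg_sub (xA i * yA i ^ l), part2']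

end Aux

/-- **Commutators of powers of `y` with `x`** (Khongsap-Wang, Lemma 3.4).  In the rational
double affine Hecke-Clifford algebra `H^c_{A_{n-1}}(u)`, for `l ≥ 0` and `i ≠ j`,
`[y_j^l, x_i] = u((y_j^l-y_i^l)/(y_j-y_i))(1+c_j c_i)s_{ij}` and
`[y_i^l, x_i] = -u Σ_{k≠i} ((y_i^l-y_k^l)/(y_i-y_k))(1+c_k c_i)s_{ki}`, the divided
differences being the sums `Σ_{a=0}^{l-1} y_j^a y_i^{l-1-a}`. -/
theorem daHCaA_comm_ypow_x (n : ℕ) (u : ℂ) (l : ℕ) (i j : Fin n) (hij : i ≠ j) :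
    ((yA j : HCA n u) ^ l * xA i - xA i * yA j ^ l
      = u • ((∑ a ∈ Finset.range l, yA j ^ a * yA i ^ (l - 1 - a))
          * ((1 + cA j * cA i) * gA (Equiv.swap i j)))) ∧
    ((yA i : HCA n u) ^ l * xA i - xA i * yA i ^ l
      = -(u • ∑ k ∈ Finset.univ.erase i,
          (∑ a ∈ Finset.range l, yA i ^ a * yA k ^ (l - 1 - a))
            * ((1 + cA k * cA i) * gA (Equiv.swap k i)))) := by
  exact ⟨part1 n u i j hij l, part2 n u i l⟩

end
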